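/- For the symmetric node system (−1, −d, d, 1) with d ∈ (0,1) on [−1,1], the second-order Lebesgue number equals λ_{4,2}(d) = 6/(d − d²), and the minimum over d ∈ (0,1) is 24, attained at d = 1/2. -/

import Mathlib

/-- Fundamental Lagrange polynomial of a node system. -/
noncomputable def fundPoly {n : ℕ} (x : Fin n → ℝ) (k : Fin n) (t : ℝ) : ℝ :=
  ∏ j ∈ Finset.univ.erase k, (t - x j) / (x k - x j)

/-- Second-order Lebesgue number of the node system (−1, −d, d, 1) on [−1,1]. -/
noncomputable def lam (d : ℝ) : ℝ :=
  sSup ((fun t => ∑ k : Fin 4, |iteratedDeriv 2 (fundPoly ![(-1 : ℝ), -d, d, 1] k) t|) ''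
    Set.Icc (-1 : ℝ) 1)

lemma dd2 (a b c K : ℝ) :
    iteratedDeriv 2 (fun t : ℝ => (t - a) * (t - b) * (t - c) * K)
      = fun t => (6 * t - 2 * (a + b + c)) * K := by
  have h1 : deriv (fun t : ℝ => (t - a) * (t - b) * (t - c) * K)
      = fun t => ((t - b) * (t - c) + (t - a) * (t - c) + (t - a) * (t - b)) * K := by
    funext t
    have h := ((((hasDerivAt_id t).sub_const a).mul ((hasDerivAt_id t).sub_const b)).mul
      ((hasDerivAt_id t).sub_const c)).mul_const K
    simp only [id_eq, Pi.mul_apply, Pi.add_apply] at h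
    have h2 : HasDerivAt (fun t : ℝ => (t - a) * (t - b) * (t - c) * K)
        (((t - b) * (t - c) + (t - a) * (t - c) + (t - a) * (t - b)) * K) t := by
      exact h.congr_deriv (by ring)
    exact h2.deriv
  rw [iteratedDeriv_succ, iteratedDeriv_one, h1]
  funext t
  have h := (((((hasDerivAt_id t).sub_const b).mul ((hasDerivAt_id t).sub_const c)).add
      ((((hasDerivAt_id t).sub_const a).mul ((hasDerivAt_id t).sub_const c)))).add
      (((hasDerivAt_id t).sub_const a).mul ((hasDerivAt_id t).sub_const b))).mul_const K
  simp only [id_eq, Pi.mul_apply, Pi.add_apply] at h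
  have h2 : HasDerivAt (fun t : ℝ => ((t - b) * (t - c) + (t - a) * (t - c) + (t - a) * (t - b)) * K)
      ((6 * t - 2 * (a + b + c)) * K) t := by
    exact h.congr_deriv (by ring)
  exact h2.deriv

lemma sumabs (x y : ℝ) (hx : |x| ≤ 6) (hy : |y| ≤ 6) : |x - y| + |x + y| ≤ 12 := by
  rw [abs_le] at hx hy
  rcases abs_cases (x - y) with ⟨h, _⟩ | ⟨h, _⟩ <;>
    rcases abs_cases (x + y) with ⟨h', _⟩ | ⟨h', _⟩ <;> linarith

/-- For nodes (−1, −d, d, 1), d ∈ (0,1): `λ_{4,2}(d) = 6/(d − d²)`, with minimum 24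
over (0,1), attained at d = 1/2. -/
theorem stmt3 :
    (∀ d ∈ Set.Ioo (0 : ℝ) 1, lam d = 6 / (d - d ^ 2)) ∧
    (∀ d ∈ Set.Ioo (0 : ℝ) 1, 24 ≤ lam d) ∧ lam (1 / 2) = 24 := by
  have key : ∀ d ∈ Set.Ioo (0 : ℝ) 1, lam d = 6 / (d - d ^ 2) := by
    rintro d ⟨hd0, hd1⟩
    have e0 : fundPoly ![(-1 : ℝ), -d, d, 1] 0
        = fun t => (t - (-d)) * (t - d) * (t - 1) * ((-1 - (-d)) * (-1 - d) * (-1 - 1))⁻¹ := by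
      funext t
      rw [fundPoly, show (Finset.univ.erase (0 : Fin 4)) = {1, 2, 3} from by decide]
      rw [Finset.prod_insert (by decide), Finset.prod_insert (by decide), Finset.prod_singleton]
      simp
      ring
    have e1 : fundPoly ![(-1 : ℝ), -d, d, 1] 1
        = fun t => (t - (-1)) * (t - d) * (t - 1) * ((-d - (-1)) * (-d - d) * (-d - 1))⁻¹ := by
      funext t
      rw [fundPoly, show (Finset.univ.erase (1 : Fin 4)) = {0, 2, 3} from by decide]
      rw [Finset.prod_insert (by decide), Finset.prod_insert (by decide), Finset.prod_singleton]
      simp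
      ring
    have e2 : fundPoly ![(-1 : ℝ), -d, d, 1] 2
        = fun t => (t - (-1)) * (t - (-d)) * (t - 1) * ((d - (-1)) * (d - (-d)) * (d - 1))⁻¹ := by
      funext t
      rw [fundPoly, show (Finset.univ.erase (2 : Fin 4)) = {0, 1, 3} from by decide]
      rw [Finset.prod_insert (by decide), Finset.prod_insert (by decide), Finset.prod_singleton]
      simp
      ring
    have e3 : fundPoly ![(-1 : ℝ), -d, d, 1] 3
        = fun t => (t - (-1)) * (t - (-d)) * (t - d) * ((1 - (-1)) * (1 - (-d)) * (1 - d))⁻¹ := by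
      funext t
      rw [fundPoly, show (Finset.univ.erase (3 : Fin 4)) = {0, 1, 2} from by decide]
      rw [Finset.prod_insert (by decide), Finset.prod_insert (by decide), Finset.prod_singleton]
      simp
      ring
    have hF : ∀ t : ℝ, (∑ k : Fin 4, |iteratedDeriv 2 (fundPoly ![(-1 : ℝ), -d, d, 1] k) t|)
        = |(6 * t - 2 * (-d + d + 1)) * ((-1 - (-d)) * (-1 - d) * (-1 - 1))⁻¹|
        + |(6 * t - 2 * (-1 + d + 1)) * ((-d - (-1)) * (-d - d) * (-d - 1))⁻¹|
        + |(6 * t - 2 * (-1 + -d + 1)) * ((d - (-1)) * (d - (-d)) * (d - 1))⁻¹|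
        + |(6 * t - 2 * (-1 + -d + d)) * ((1 - (-1)) * (1 - (-d)) * (1 - d))⁻¹| := by
      intro t
      rw [Fin.sum_univ_four, e0, e1, e2, e3, dd2, dd2, dd2, dd2]
    -- absolute values of the denominators
    have hP : (0 : ℝ) < 1 - d ^ 2 := by nlinarith
    have k0 : |((-1 : ℝ) - (-d)) * (-1 - d) * (-1 - 1)| = 2 * (1 - d ^ 2) := by
      rw [show ((-1 : ℝ) - (-d)) * (-1 - d) * (-1 - 1) = -(2 * (1 - d ^ 2)) from by ring,
        abs_neg, abs_of_pos (by linarith)]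
    have k1 : |(-d - (-1)) * (-d - d) * (-d - 1)| = 2 * d * (1 - d ^ 2) := by
      rw [show (-d - (-1)) * (-d - d) * (-d - 1) = 2 * d * (1 - d ^ 2) from by ring,
        abs_of_pos (by positivity)]
    have k2 : |(d - (-1)) * (d - (-d)) * (d - 1)| = 2 * d * (1 - d ^ 2) := by
      rw [show (d - (-1)) * (d - (-d)) * (d - 1) = -(2 * d * (1 - d ^ 2)) from by ring,
        abs_neg, abs_of_pos (by positivity)]
    have k3 : |((1 : ℝ) - (-1)) * (1 - (-d)) * (1 - d)| = 2 * (1 - d ^ 2) := by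
      rw [show ((1 : ℝ) - (-1)) * (1 - (-d)) * (1 - d) = 2 * (1 - d ^ 2) from by ring,
        abs_of_pos (by linarith)]
    have hdne : d ≠ 0 := ne_of_gt hd0
    have hPne : (1 : ℝ) - d ^ 2 ≠ 0 := ne_of_gt hP
    have hval : 12 * (2 * (1 - d ^ 2))⁻¹ + 12 * (2 * d * (1 - d ^ 2))⁻¹ = 6 / (d - d ^ 2) := by
      have h1 : d - d ^ 2 ≠ 0 := by nlinarith
      field_simp
      ring
    have hub : ∀ t ∈ Set.Icc (-1 : ℝ) 1,
        (∑ k : Fin 4, |iteratedDeriv 2 (fundPoly ![(-1 : ℝ), -d, d, 1] k) t|) ≤ 6 / (d - d ^ 2) := by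
      rintro t ⟨ht1, ht2⟩
      rw [hF t]
      simp only [abs_mul, abs_inv, k0, k1, k2, k3]
      have hxt : |6 * t| ≤ 6 := by rw [abs_le]; constructor <;> linarith
      have a1 : |6 * t - 2 * (-d + d + 1)| + |6 * t - 2 * (-1 + -d + d)| ≤ 12 := by
        have h := sumabs (6 * t) 2 hxt (by norm_num)
        rw [show 6 * t - 2 * (-d + d + 1) = 6 * t - 2 from by ring,
          show 6 * t - 2 * (-1 + -d + d) = 6 * t + 2 from by ring]
        exact h
      have a2 : |6 * t - 2 * (-1 + d + 1)| + |6 * t - 2 * (-1 + -d + 1)| ≤ 12 := by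
        have h := sumabs (6 * t) (2 * d) hxt (by rw [abs_le]; constructor <;> linarith)
        rw [show 6 * t - 2 * (-1 + d + 1) = 6 * t - 2 * d from by ring,
          show 6 * t - 2 * (-1 + -d + 1) = 6 * t + 2 * d from by ring]
        exact h
      have hu : (0 : ℝ) ≤ (2 * (1 - d ^ 2))⁻¹ := by positivity
      have hv : (0 : ℝ) ≤ (2 * d * (1 - d ^ 2))⁻¹ := by positivity
      have b1 := mul_le_mul_of_nonneg_right a1 hu
      have b2 := mul_le_mul_of_nonneg_right a2 hv
      rw [add_mul] at b1 b2
      linarith [hval.ge, hval.le, b1, b2, hval]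
    have heq : (∑ k : Fin 4, |iteratedDeriv 2 (fundPoly ![(-1 : ℝ), -d, d, 1] k) 1|)
        = 6 / (d - d ^ 2) := by
      rw [hF 1]
      simp only [abs_mul, abs_inv, k0, k1, k2, k3]
      rw [abs_of_pos (show (0:ℝ) < 6 * 1 - 2 * (-d + d + 1) from by linarith),
        abs_of_pos (show (0:ℝ) < 6 * 1 - 2 * (-1 + d + 1) from by linarith),
        abs_of_pos (show (0:ℝ) < 6 * 1 - 2 * (-1 + -d + 1) from by linarith),
        abs_of_pos (show (0:ℝ) < 6 * 1 - 2 * (-1 + -d + d) from by linarith)]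
      have h1 : d - d ^ 2 ≠ 0 := by nlinarith
      field_simp
      ring
    have hg : IsGreatest
        ((fun t => ∑ k : Fin 4, |iteratedDeriv 2 (fundPoly ![(-1 : ℝ), -d, d, 1] k) t|) ''
          Set.Icc (-1 : ℝ) 1) (6 / (d - d ^ 2)) := by
      constructor
      · exact ⟨1, by norm_num, heq⟩
      · rintro y ⟨t, ht, rfl⟩
        exact hub t ht
    exact hg.csSup_eq
  refine ⟨key, ?_, ?_⟩
  · rintro d hd
    rw [key d hd]
    obtain ⟨hd0, hd1⟩ := hd
    have h1 : (0 : ℝ) < d - d ^ 2 := by nlinarith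
    rw [le_div_iff₀ h1]
    nlinarith [sq_nonneg (2 * d - 1)]
  · rw [key (1 / 2) (by norm_num)]
    norm_num
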